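/- The scaled block matrix constructed as Σ_{i,j} = √(α_i α_j) Σ̃_{i,j} for i ≠ j (with Σ̃_{j,i} = Σ̃_{i,j}ᵀ) and SPD diagonal blocks Σ_{i,i}, using α_i as in the blockwise scaling construction, is symmetric positive definite. -/

import Mathlib

open Matrix Finset MeasureTheory Real

noncomputable def specNorm {d : ℕ} (A : Matrix (Fin d) (Fin d) ℝ) : ℝ :=
  ‖(Matrix.toEuclideanLin A).toContinuousLinearMap‖

noncomputable def specNormC {d : ℕ} (A : Matrix (Fin d) (Fin d) ℂ) : ℝ :=
  ‖(Matrix.toEuclideanLin A).toContinuousLinearMap‖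

/-- The `(i,j)` block of a blocked matrix. -/
def blk {𝕜 : Type*} {n d : ℕ} (S : Matrix (Fin n × Fin d) (Fin n × Fin d) 𝕜) (i j : Fin n) :
    Matrix (Fin d) (Fin d) 𝕜 := fun a b => S (i, a) (j, b)

/-- Smallest real eigenvalue (as the infimum of the real spectrum). -/
noncomputable def lamMin {m : Type*} [Fintype m] [DecidableEq m]
    (A : Matrix m m ℝ) : ℝ := sInf (spectrum ℝ A)

/-- Smallest real eigenvalue of a complex matrix. -/
noncomputable def lamMinC {m : Type*} [Fintype m] [DecidableEq m]
    (A : Matrix m m ℂ) : ℝ := sInf {x : ℝ | (x : ℂ) ∈ spectrum ℂ A}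
/-- The assembled block matrix: SPD diagonal blocks `D i` and scaled off-diagonal
blocks `√(αᵢαⱼ)·T i j`. -/
noncomputable def assembled {M d : ℕ} (D : Fin M → Matrix (Fin d) (Fin d) ℝ)
    (T : Fin M → Fin M → Matrix (Fin d) (Fin d) ℝ) (α : Fin M → ℝ) :
    Matrix (Fin M × Fin d) (Fin M × Fin d) ℝ :=
  fun p q =>
    if p.1 = q.1 then D p.1 p.2 q.2
    else Real.sqrt (α p.1 * α q.1) * T p.1 q.1 p.2 q.2

namespace Stmt11Aux

/-- Euclidean norm of a plain vector. -/
noncomputable def en {d : ℕ} (x : Fin d → ℝ) : ℝ := Real.sqrt (∑ a, x a ^ 2)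

lemma en_nonneg {d : ℕ} (x : Fin d → ℝ) : 0 ≤ en x := Real.sqrt_nonneg _

lemma en_sq {d : ℕ} (x : Fin d → ℝ) : en x ^ 2 = ∑ a, x a ^ 2 :=
  Real.sq_sqrt (Finset.sum_nonneg fun _ _ => sq_nonneg _)

lemma en_eq_norm {d : ℕ} (x : Fin d → ℝ) :
    en x = ‖(WithLp.equiv 2 (Fin d → ℝ)).symm x‖ := by
  rw [EuclideanSpace.norm_eq]
  simp [en, Real.norm_eq_abs, sq_abs]

lemma specNorm_nonneg {d : ℕ} (A : Matrix (Fin d) (Fin d) ℝ) : 0 ≤ specNorm A :=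
  norm_nonneg _

lemma en_mulVec_le {d : ℕ} (A : Matrix (Fin d) (Fin d) ℝ) (x : Fin d → ℝ) :
    en (A *ᵥ x) ≤ specNorm A * en x := by
  rw [en_eq_norm, en_eq_norm]
  change ‖(Matrix.toEuclideanLin A) ((WithLp.equiv 2 (Fin d → ℝ)).symm x)‖ ≤ _
  have := ((Matrix.toEuclideanLin A).toContinuousLinearMap).le_opNorm
    ((WithLp.equiv 2 (Fin d → ℝ)).symm x)
  simpa only [specNorm, LinearMap.coe_toContinuousLinearMap'] using this

lemma abs_dot_le {d : ℕ} (x y : Fin d → ℝ) :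
    |x ⬝ᵥ y| ≤ en x * en y := by
  have h := abs_real_inner_le_norm ((WithLp.equiv 2 (Fin d → ℝ)).symm x)
    ((WithLp.equiv 2 (Fin d → ℝ)).symm y)
  rw [show inner ℝ ((WithLp.equiv 2 (Fin d → ℝ)).symm x) ((WithLp.equiv 2 (Fin d → ℝ)).symm y)
    = x ⬝ᵥ y by rw [dotProduct_comm]; rfl] at h
  simpa [en_eq_norm] using h

lemma abs_dot_mulVec_le {d : ℕ} (A : Matrix (Fin d) (Fin d) ℝ) (x y : Fin d → ℝ) :
    |x ⬝ᵥ (A *ᵥ y)| ≤ specNorm A * en x * en y := by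
  calc |x ⬝ᵥ (A *ᵥ y)| ≤ en x * en (A *ᵥ y) := abs_dot_le _ _
    _ ≤ en x * (specNorm A * en y) :=
        mul_le_mul_of_nonneg_left (en_mulVec_le A y) (en_nonneg x)
    _ = specNorm A * en x * en y := by ring

lemma specNorm_le {d : ℕ} (A : Matrix (Fin d) (Fin d) ℝ) (c : ℝ) (hc : 0 ≤ c)
    (h : ∀ x, en (A *ᵥ x) ≤ c * en x) : specNorm A ≤ c := by
  apply ContinuousLinearMap.opNorm_le_bound _ hc
  intro v
  have := h ((WithLp.equiv 2 (Fin d → ℝ)) v)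
  rw [en_eq_norm, en_eq_norm] at this
  simpa [Matrix.toEuclideanLin_apply] using this

lemma specNorm_transpose_le {d : ℕ} (A : Matrix (Fin d) (Fin d) ℝ) :
    specNorm Aᵀ ≤ specNorm A := by
  apply specNorm_le _ _ (specNorm_nonneg A)
  intro y
  set u := Aᵀ *ᵥ y with hu
  have h1 : en u ^ 2 = u ⬝ᵥ (Aᵀ *ᵥ y) := by
    rw [en_sq, ← hu]
    simp [dotProduct, pow_two]
  have h2 : u ⬝ᵥ (Aᵀ *ᵥ y) = (A *ᵥ u) ⬝ᵥ y := by
    rw [Matrix.dotProduct_mulVec, Matrix.vecMul_transpose]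
  have h3 : (A *ᵥ u) ⬝ᵥ y ≤ en (A *ᵥ u) * en y := by
    have := abs_dot_le (A *ᵥ u) y
    exact le_trans (le_abs_self _) this
  have h4 : en (A *ᵥ u) ≤ specNorm A * en u := en_mulVec_le A u
  have h5 : en u ^ 2 ≤ specNorm A * en u * en y := by
    rw [h1, h2]
    calc (A *ᵥ u) ⬝ᵥ y ≤ en (A *ᵥ u) * en y := h3
      _ ≤ specNorm A * en u * en y :=
          mul_le_mul_of_nonneg_right h4 (en_nonneg y)
  rcases eq_or_lt_of_le (en_nonneg u) with h0 | h0
  · rw [← h0]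
    exact mul_nonneg (specNorm_nonneg A) (en_nonneg y)
  · nlinarith [en_nonneg y, specNorm_nonneg A]

lemma specNorm_transpose {d : ℕ} (A : Matrix (Fin d) (Fin d) ℝ) :
    specNorm Aᵀ = specNorm A := by
  refine le_antisymm (specNorm_transpose_le A) ?_
  conv_lhs => rw [← Matrix.transpose_transpose A]
  exact specNorm_transpose_le Aᵀ

lemma cs {d : ℕ} {P : Matrix (Fin d) (Fin d) ℝ} (hP : P.PosSemidef) (x y : Fin d → ℝ) :
    (x ⬝ᵥ (P *ᵥ y)) ^ 2 ≤ (x ⬝ᵥ (P *ᵥ x)) * (y ⬝ᵥ (P *ᵥ y)) := by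
  have hsym : ∀ u v : Fin d → ℝ, u ⬝ᵥ (P *ᵥ v) = v ⬝ᵥ (P *ᵥ u) := by
    intro u v
    rw [Matrix.dotProduct_mulVec, ← Matrix.mulVec_transpose,
      dotProduct_comm]
    congr 1
    have : Pᵀ = P := by
      have := hP.1
      rwa [Matrix.IsHermitian, Matrix.conjTranspose_eq_transpose_of_trivial] at this
    rw [this]
  have key : ∀ t : ℝ, 0 ≤ (y ⬝ᵥ (P *ᵥ y)) * (t * t) + (2 * (x ⬝ᵥ (P *ᵥ y))) * t
      + (x ⬝ᵥ (P *ᵥ x)) := by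
    intro t
    have h := hP.dotProduct_mulVec_nonneg (x + t • y)
    simp only [star_trivial] at h
    have expand : (x + t • y) ⬝ᵥ (P *ᵥ (x + t • y)) =
        (y ⬝ᵥ (P *ᵥ y)) * (t * t) + (2 * (x ⬝ᵥ (P *ᵥ y))) * t + (x ⬝ᵥ (P *ᵥ x)) := by
      rw [Matrix.mulVec_add, Matrix.mulVec_smul, add_dotProduct,
        smul_dotProduct, dotProduct_add, dotProduct_add,
        dotProduct_smul, dotProduct_smul]
      have hyx := hsym y x
      simp only [smul_eq_mul]
      rw [hyx]
      ring
    rw [expand] at h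
    exact h
  have hd := discrim_le_zero key
  rw [discrim] at hd
  nlinarith [hd]

lemma coercive {d : ℕ} {P : Matrix (Fin d) (Fin d) ℝ} (hP : P.PosDef) (x : Fin d → ℝ) :
    (specNorm P⁻¹)⁻¹ * en x ^ 2 ≤ x ⬝ᵥ (P *ᵥ x) := by
  have hpsd : P.PosSemidef := hP.posSemidef
  have hQnn : 0 ≤ x ⬝ᵥ (P *ᵥ x) := by simpa [star_trivial] using hpsd.dotProduct_mulVec_nonneg x
  rcases eq_or_lt_of_le (specNorm_nonneg P⁻¹) with h0 | h0
  · rw [← h0]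
    simpa using hQnn
  · have hdet : IsUnit P.det := hP.det_pos.ne'.isUnit
    have hPPinv : P *ᵥ (P⁻¹ *ᵥ x) = x := by
      rw [Matrix.mulVec_mulVec, Matrix.mul_nonsing_inv _ hdet, Matrix.one_mulVec]
    have h1 : x ⬝ᵥ (P *ᵥ (P⁻¹ *ᵥ x)) = en x ^ 2 := by
      rw [hPPinv, en_sq]
      simp [dotProduct, pow_two]
    have h2 : (P⁻¹ *ᵥ x) ⬝ᵥ (P *ᵥ (P⁻¹ *ᵥ x)) = x ⬝ᵥ (P⁻¹ *ᵥ x) := by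
      rw [hPPinv, dotProduct_comm]
    have h3 : x ⬝ᵥ (P⁻¹ *ᵥ x) ≤ specNorm P⁻¹ * en x ^ 2 := by
      have habs := abs_dot_mulVec_le P⁻¹ x x
      calc x ⬝ᵥ (P⁻¹ *ᵥ x) ≤ |x ⬝ᵥ (P⁻¹ *ᵥ x)| := le_abs_self _
        _ ≤ specNorm P⁻¹ * en x * en x := habs
        _ = specNorm P⁻¹ * en x ^ 2 := by ring
    have hcs := cs hpsd x (P⁻¹ *ᵥ x)
    rw [h1, h2] at hcs
    rcases eq_or_lt_of_le (en_nonneg x) with he | he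
    · rw [← he]
      simpa using hQnn
    · have h4 : (en x ^ 2) ^ 2 ≤ (x ⬝ᵥ (P *ᵥ x)) * (specNorm P⁻¹ * en x ^ 2) := by
        calc (en x ^ 2) ^ 2 ≤ (x ⬝ᵥ (P *ᵥ x)) * (x ⬝ᵥ (P⁻¹ *ᵥ x)) := hcs
          _ ≤ (x ⬝ᵥ (P *ᵥ x)) * (specNorm P⁻¹ * en x ^ 2) :=
              mul_le_mul_of_nonneg_left h3 hQnn
      rw [inv_mul_le_iff₀ h0]
      have hen2 : 0 < en x ^ 2 := by positivity
      nlinarith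

lemma specNorm_inv_pos {d : ℕ} (a : Fin d) {P : Matrix (Fin d) (Fin d) ℝ}
    (hP : P.PosDef) : 0 < specNorm P⁻¹ := by
  have hinv : P⁻¹.PosDef := hP.inv
  set v : Fin d → ℝ := Pi.single a 1 with hv'
  have hv : v ≠ 0 := by
    intro h
    have := congrFun h a
    simp [hv'] at this
  have hpos : 0 < v ⬝ᵥ (P⁻¹ *ᵥ v) := by simpa [star_trivial] using hinv.dotProduct_mulVec_pos hv
  have habs := abs_dot_mulVec_le P⁻¹ v v
  nlinarith [le_abs_self (v ⬝ᵥ (P⁻¹ *ᵥ v)), en_nonneg v, specNorm_nonneg P⁻¹,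
    mul_nonneg (en_nonneg v) (en_nonneg v)]

lemma sum_diff_eq {M : ℕ} (i : Fin M) (g : Fin M → ℝ) :
    ∑ j ∈ univ \ {i}, g j = ∑ j, if j = i then 0 else g j := by
  have h := Finset.sum_eq_sum_sdiff_singleton_add (Finset.mem_univ i)
    (fun j => if j = i then 0 else g j)
  simp only [eq_self_iff_true, if_true, add_zero] at h
  rw [h]
  apply Finset.sum_congr rfl
  intro j hj
  rw [Finset.mem_sdiff, Finset.mem_singleton] at hj
  rw [if_neg hj.2]

lemma sum_offdiag_swap {M : ℕ} (f : Fin M → Fin M → ℝ) :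
    ∑ i, ∑ j ∈ univ \ {i}, f i j = ∑ i, ∑ j ∈ univ \ {i}, f j i := by
  simp only [sum_diff_eq]
  rw [Finset.sum_comm]
  apply Finset.sum_congr rfl
  intro x _
  apply Finset.sum_congr rfl
  intro y _
  by_cases hxy : x = y
  · subst hxy; simp
  · rw [if_neg hxy, if_neg (Ne.symm hxy)]

end Stmt11Aux

/-- the block matrix assembled from SPD diagonal blocks and the
blockwise-scaled off-diagonal blocks `Σᵢⱼ = √(αᵢαⱼ) Σ̃ᵢⱼ` (with the α's from the
blockwise scaling construction) is symmetric positive definite. -/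
theorem stmt11 {M d : ℕ} (D : Fin M → Matrix (Fin d) (Fin d) ℝ)
    (T : Fin M → Fin M → Matrix (Fin d) (Fin d) ℝ)
    (hD : ∀ i, (D i).PosDef) (hT : ∀ i j, i ≠ j → T j i = (T i j)ᵀ)
    (δ ε : ℝ) (hδ : 0 < δ) (hε : 0 < ε) (hε1 : ε < 1)
    (s α : Fin M → ℝ)
    (hs : ∀ i, s i = (∑ j ∈ univ \ {i}, specNorm (T i j)) + δ)
    (hα : ∀ i, α i = min 1 (ε * (specNorm ((D i)⁻¹))⁻¹ / s i)) :
    (assembled D T α).PosDef := by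
  classical
  set c : Fin M → ℝ := fun i => (specNorm ((D i)⁻¹))⁻¹ with hc
  have hs_pos : ∀ i, 0 < s i := by
    intro i
    rw [hs i]
    have h1 : (0:ℝ) ≤ ∑ j ∈ univ \ {i}, specNorm (T i j) :=
      Finset.sum_nonneg fun j _ => Stmt11Aux.specNorm_nonneg _
    linarith
  have hc_nonneg : ∀ i, 0 ≤ c i := fun i => inv_nonneg.2 (Stmt11Aux.specNorm_nonneg _)
  have hα_nonneg : ∀ i, 0 ≤ α i := by
    intro i
    rw [hα i]
    exact le_min zero_le_one
      (div_nonneg (mul_nonneg hε.le (hc_nonneg i)) (hs_pos i).le)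
  have hαs : ∀ i, α i * s i ≤ ε * c i := by
    intro i
    have h1 : α i ≤ ε * c i / s i := (hα i) ▸ min_le_right _ _
    rw [← le_div_iff₀ (hs_pos i)]
    exact h1
  -- Hermitian
  have herm : (assembled D T α).IsHermitian := by
    rw [Matrix.IsHermitian, Matrix.conjTranspose_eq_transpose_of_trivial]
    ext ⟨i, a⟩ ⟨j, b⟩
    simp only [Matrix.transpose_apply, assembled]
    by_cases hij : i = j
    · subst hij
      simp only [if_pos rfl]
      have hsym : (D i)ᵀ = D i := by
        have h := (hD i).1
        rwa [Matrix.IsHermitian, Matrix.conjTranspose_eq_transpose_of_trivial] at h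
      have := congrFun (congrFun hsym a) b
      simpa [Matrix.transpose_apply] using this
    · rw [if_neg (Ne.symm hij), if_neg hij, mul_comm (α j) (α i), hT i j hij]
      rfl
  refine Matrix.PosDef.of_dotProduct_mulVec_pos herm fun x hx => ?_
  rw [star_trivial]
  set A := assembled D T α with hA
  set u : Fin M → Fin d → ℝ := fun i a => x (i, a) with hu
  set N : Fin M → ℝ := fun i => ∑ a, x (i, a) ^ 2 with hN
  have hN_nonneg : ∀ i, 0 ≤ N i := fun i => Finset.sum_nonneg fun _ _ => sq_nonneg _
  have hNen : ∀ i, N i = Stmt11Aux.en (u i) ^ 2 := fun i => (Stmt11Aux.en_sq (u i)).symm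
  set S : Fin M → Fin M → ℝ :=
    fun i j => ∑ a, ∑ b, x (i, a) * (A (i, a) (j, b) * x (j, b)) with hS
  have hQ : x ⬝ᵥ (A *ᵥ x) = ∑ i, ∑ j, S i j := by
    simp only [hS, dotProduct, Matrix.mulVec, Fintype.sum_prod_type, Finset.mul_sum]
    exact Finset.sum_congr rfl fun i _ => Finset.sum_comm
  have hSdiag : ∀ i, S i i = u i ⬝ᵥ (D i *ᵥ u i) := by
    intro i
    simp only [hS, hA, assembled, dotProduct, Matrix.mulVec, Finset.mul_sum, hu,
      eq_self_iff_true, if_true]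
  have hScross : ∀ i j, i ≠ j →
      S i j = Real.sqrt (α i * α j) * (u i ⬝ᵥ (T i j *ᵥ u j)) := by
    intro i j hij
    simp only [hS, hA, assembled, dotProduct, Matrix.mulVec, Finset.mul_sum, hu,
      if_neg hij]
    ring_nf
    apply Finset.sum_congr rfl
    intro a _
    apply Finset.sum_congr rfl
    intro b _
    ring
  have hdiag_ge : ∀ i, c i * N i ≤ S i i := by
    intro i
    rw [hSdiag i, hNen i]
    exact Stmt11Aux.coercive (hD i) (u i)
  have hnT_symm : ∀ i j, i ≠ j → specNorm (T j i) = specNorm (T i j) := by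
    intro i j hij
    rw [hT i j hij, Stmt11Aux.specNorm_transpose]
  have hcross_ge : ∀ i j, i ≠ j →
      -(specNorm (T i j) * (α i * N i + α j * N j) / 2) ≤ S i j := by
    intro i j hij
    rw [hScross i j hij]
    have habs : |u i ⬝ᵥ (T i j *ᵥ u j)|
        ≤ specNorm (T i j) * Stmt11Aux.en (u i) * Stmt11Aux.en (u j) :=
      Stmt11Aux.abs_dot_mulVec_le _ _ _
    have hsq : Real.sqrt (α i * α j) = Real.sqrt (α i) * Real.sqrt (α j) :=
      Real.sqrt_mul (hα_nonneg i) _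
    have h1 : (0:ℝ) ≤ Real.sqrt (α i * α j) := Real.sqrt_nonneg _
    have hii : Real.sqrt (α i) ^ 2 = α i := Real.sq_sqrt (hα_nonneg i)
    have hjj : Real.sqrt (α j) ^ 2 = α j := Real.sq_sqrt (hα_nonneg j)
    have hTnn := Stmt11Aux.specNorm_nonneg (T i j)
    have h2 : Real.sqrt (α i * α j) *
        (specNorm (T i j) * Stmt11Aux.en (u i) * Stmt11Aux.en (u j))
        ≤ specNorm (T i j) * (α i * N i + α j * N j) / 2 := by
      rw [hsq, hNen i, hNen j]
      set ai := Real.sqrt (α i) with hai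
      set aj := Real.sqrt (α j) with haj
      set ei := Stmt11Aux.en (u i) with hei
      set ej := Stmt11Aux.en (u j) with hej
      rw [← hii, ← hjj]
      nlinarith [mul_nonneg hTnn (sq_nonneg (ai * ei - aj * ej))]
    have hP : -(specNorm (T i j) * Stmt11Aux.en (u i) * Stmt11Aux.en (u j))
        ≤ u i ⬝ᵥ (T i j *ᵥ u j) := neg_le_of_abs_le habs
    have h3 := mul_le_mul_of_nonneg_left hP h1
    nlinarith [h2, h3]
  -- rearranged cross bound
  set nT : Fin M → Fin M → ℝ := fun i j => specNorm (T i j) with hnT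
  have hrow : ∀ i, ∑ j ∈ univ \ {i}, nT i j = s i - δ := by
    intro i
    rw [hnT]
    rw [hs i]
    ring
  have key2 : ∑ i, ∑ j ∈ univ \ {i}, (nT i j * (α i * N i + α j * N j) / 2)
      = ∑ i, (α i * N i) * (s i - δ) := by
    have hsplit : ∀ i : Fin M, ∑ j ∈ univ \ {i}, (nT i j * (α i * N i + α j * N j) / 2)
        = ∑ j ∈ univ \ {i}, (nT i j * ((α i * N i) / 2))
          + ∑ j ∈ univ \ {i}, (nT i j * ((α j * N j) / 2)) := by
      intro i
      rw [← Finset.sum_add_distrib]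
      apply Finset.sum_congr rfl
      intro j _
      ring
    have hswap : ∑ i, ∑ j ∈ univ \ {i}, (nT i j * ((α j * N j) / 2))
        = ∑ i, ∑ j ∈ univ \ {i}, (nT i j * ((α i * N i) / 2)) := by
      rw [Stmt11Aux.sum_offdiag_swap (fun i j => nT i j * ((α j * N j) / 2))]
      apply Finset.sum_congr rfl
      intro i _
      apply Finset.sum_congr rfl
      intro j hj
      rw [Finset.mem_sdiff, Finset.mem_singleton] at hj
      have hsymm : nT j i = nT i j := by
        simp only [hnT]
        exact hnT_symm i j (fun h => hj.2 (h ▸ rfl))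
      simp only [hsymm]
    calc ∑ i, ∑ j ∈ univ \ {i}, (nT i j * (α i * N i + α j * N j) / 2)
        = ∑ i, (∑ j ∈ univ \ {i}, (nT i j * ((α i * N i) / 2))
            + ∑ j ∈ univ \ {i}, (nT i j * ((α j * N j) / 2))) := by
          exact Finset.sum_congr rfl fun i _ => hsplit i
      _ = ∑ i, ∑ j ∈ univ \ {i}, (nT i j * ((α i * N i) / 2))
          + ∑ i, ∑ j ∈ univ \ {i}, (nT i j * ((α j * N j) / 2)) :=
            Finset.sum_add_distrib
      _ = ∑ i, ∑ j ∈ univ \ {i}, (nT i j * ((α i * N i) / 2))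
          + ∑ i, ∑ j ∈ univ \ {i}, (nT i j * ((α i * N i) / 2)) := by rw [hswap]
      _ = ∑ i, (2 * ((∑ j ∈ univ \ {i}, nT i j) * ((α i * N i) / 2))) := by
          rw [← Finset.sum_add_distrib]
          apply Finset.sum_congr rfl
          intro i _
          rw [← Finset.sum_mul]
          ring
      _ = ∑ i, (α i * N i) * (s i - δ) := by
          apply Finset.sum_congr rfl
          intro i _
          rw [hrow i]
          ring
  -- assemble
  have hQ_ge : ∑ i, ∑ j, S i j
      ≥ ∑ i, c i * N i - ∑ i, (α i * N i) * (s i - δ) := by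
    rw [← key2]
    have hrow_decomp : ∀ i : Fin M, ∑ j, S i j = ∑ j ∈ univ \ {i}, S i j + S i i := by
      intro i
      exact Finset.sum_eq_sum_sdiff_singleton_add (Finset.mem_univ i) _
    calc ∑ i, ∑ j, S i j
        = ∑ i, (∑ j ∈ univ \ {i}, S i j + S i i) :=
          Finset.sum_congr rfl fun i _ => hrow_decomp i
      _ = ∑ i, ∑ j ∈ univ \ {i}, S i j + ∑ i, S i i := Finset.sum_add_distrib
      _ ≥ ∑ i, ∑ j ∈ univ \ {i}, -(nT i j * (α i * N i + α j * N j) / 2)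
          + ∑ i, c i * N i := by
          apply add_le_add
          · apply Finset.sum_le_sum
            intro i _
            apply Finset.sum_le_sum
            intro j hj
            rw [Finset.mem_sdiff, Finset.mem_singleton] at hj
            exact hcross_ge i j (fun h => hj.2 (h ▸ rfl))
          · exact Finset.sum_le_sum fun i _ => hdiag_ge i
      _ = ∑ i, c i * N i - ∑ i, ∑ j ∈ univ \ {i}, (nT i j * (α i * N i + α j * N j) / 2) := by
          simp only [Finset.sum_neg_distrib]
          ring
  have hterm : ∀ i, (α i * N i) * (s i - δ) ≤ ε * (c i * N i) := by
    intro i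
    nlinarith [mul_le_mul_of_nonneg_right (hαs i) (hN_nonneg i),
      mul_nonneg (mul_nonneg (hα_nonneg i) (hN_nonneg i)) hδ.le]
  have hfinal : ∑ i, ∑ j, S i j ≥ (1 - ε) * ∑ i, c i * N i := by
    have h1 : ∑ i, (α i * N i) * (s i - δ) ≤ ∑ i, ε * (c i * N i) :=
      Finset.sum_le_sum fun i _ => hterm i
    have h2 : ∑ i, ε * (c i * N i) = ε * ∑ i, c i * N i := by
      rw [Finset.mul_sum]
    have := hQ_ge
    rw [h2] at h1
    linarith [hQ_ge, h1]
  -- strict positivity of ∑ c i * N i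
  obtain ⟨p, hp⟩ := Function.ne_iff.1 hx
  have hp' : x p ≠ 0 := by simpa using hp
  have hcpos : 0 < c p.1 := by
    rw [hc]
    exact inv_pos.2 (Stmt11Aux.specNorm_inv_pos p.2 (hD p.1))
  have hNpos : 0 < N p.1 := by
    rw [hN]
    apply Finset.sum_pos' (fun a _ => sq_nonneg _)
    refine ⟨p.2, Finset.mem_univ _, ?_⟩
    have : x (p.1, p.2) ≠ 0 := by
      rcases p with ⟨i, a⟩
      exact hp'
    exact lt_of_le_of_ne (sq_nonneg _) (Ne.symm (pow_ne_zero 2 this))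
  have hsum_pos : 0 < ∑ i, c i * N i := by
    apply Finset.sum_pos' (fun i _ => mul_nonneg (hc_nonneg i) (hN_nonneg i))
    exact ⟨p.1, Finset.mem_univ _, mul_pos hcpos hNpos⟩
  rw [hQ]
  calc (0:ℝ) < (1 - ε) * ∑ i, c i * N i := mul_pos (by linarith) hsum_pos
    _ ≤ ∑ i, ∑ j, S i j := hfinal
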